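/- In ℝ² with the Euclidean norm, let Ω₁ = {(t,t²) : t ∈ ℝ}, Ω₂ = {(t,−t²) : t ∈ ℝ}, and x̄ = (0,0). Then for every ε > 0, (Ω₁ − (0,−ε)) ∩ (Ω₂ − (0,ε)) = ∅; consequently the collection {Ω₁, Ω₂} is not [q]-semiregular at x̄ for any q > 0. -/

import Mathlib

open Metric

local notation "E" => EuclideanSpace ℝ (Fin 2)

/-- The vector `(a, b)` in `E`. -/
def vec (a b : ℝ) : E := WithLp.toLp 2 ![a, b]

/-- `[q]`-semiregularity of the pair `{Ω₁, Ω₂}` at `0`. -/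
def SemiReg2 (q : ℝ) (Ω₁ Ω₂ : Set E) : Prop :=
  ∃ α > (0:ℝ), ∃ δ > (0:ℝ), ∀ ρ ∈ Set.Ioo (0:ℝ) δ, ∀ x₁ x₂ : E,
    ‖x₁‖ ≤ (α * ρ) ^ (1 / q) → ‖x₂‖ ≤ (α * ρ) ^ (1 / q) →
    ∃ y ∈ Metric.closedBall (0:E) ρ, y + x₁ ∈ Ω₁ ∧ y + x₂ ∈ Ω₂

lemma norm_vec0 (ε : ℝ) : ‖(vec 0 ε : E)‖ = |ε| := by
  have : ‖(vec 0 ε : E)‖ = Real.sqrt (∑ i : Fin 2, ‖(vec 0 ε : E) i‖ ^ 2) :=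
    EuclideanSpace.norm_eq _
  rw [this]
  simp [vec, Fin.sum_univ_two, Real.sqrt_sq_eq_abs, Real.norm_eq_abs, sq_abs]

theorem not_semiReg_parabolas :
    (∀ ε > (0:ℝ),
      {y : E | y + vec (0) (-ε) ∈ {p : E | ∃ t : ℝ, p = ![t, t ^ 2]} ∧
               y + vec (0) (ε) ∈ {p : E | ∃ t : ℝ, p = ![t, -t ^ 2]}} = ∅) ∧
    ∀ q > (0:ℝ),
      ¬ SemiReg2 q {p : E | ∃ t : ℝ, p = ![t, t ^ 2]} {p : E | ∃ t : ℝ, p = ![t, -t ^ 2]} := by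
  have key : ∀ ε > (0:ℝ),
      {y : E | y + vec (0) (-ε) ∈ {p : E | ∃ t : ℝ, p = ![t, t ^ 2]} ∧
               y + vec (0) (ε) ∈ {p : E | ∃ t : ℝ, p = ![t, -t ^ 2]}} = ∅ := by
    intro ε hε
    ext y
    simp only [Set.mem_setOf_eq, Set.mem_empty_iff_false, iff_false, not_and]
    rintro ⟨t, ht⟩ ⟨s, hs⟩
    have ht0 := congrFun ht 0
    have ht1 := congrFun ht 1
    have hs0 := congrFun hs 0
    have hs1 := congrFun hs 1
    simp only [PiLp.add_apply, vec, PiLp.toLp_apply, Matrix.cons_val_zero, Matrix.cons_val_one,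
      Matrix.head_cons] at ht0 ht1 hs0 hs1
    have hts : t = s := by linarith
    nlinarith [sq_nonneg t]
  refine ⟨key, ?_⟩
  rintro q hq ⟨α, hα, δ, hδ, H⟩
  set ρ := δ / 2 with hρdef
  have hρ : ρ ∈ Set.Ioo (0:ℝ) δ := ⟨by positivity, by simp [hρdef]; linarith⟩
  set ε := (α * ρ) ^ (1 / q) with hεdef
  have hε : 0 < ε := Real.rpow_pos_of_pos (by positivity) _
  have h1 : ‖(vec 0 (-ε) : E)‖ ≤ ε := by rw [norm_vec0]; simp [abs_of_pos hε]
  have h2 : ‖(vec 0 ε : E)‖ ≤ ε := by rw [norm_vec0]; simp [abs_of_pos hε]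
  obtain ⟨y, -, hy1, hy2⟩ := H ρ hρ (vec 0 (-ε)) (vec 0 ε) h1 h2
  have := key ε hε
  have : y ∈ ({} : Set E) := by rw [← this]; exact ⟨hy1, hy2⟩
  exact this
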